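/- Let p be a prime with p ≡ 3 (mod 4), let G̃ be a finite group, let f : DihedralGroup p →* G̃ be injective, let a : ZMod p and x : G̃ satisfy x^2 = f (DihedralGroup.sr a) and ⊤ = f.range ⊔ Subgroup.zpowers x. Let K = {H : Subgroup G̃ | ∃ y : G̃, H = Subgroup.map (MulAut.conj y).toMonoidHom f.range}. Then the number of H ∈ K with Nat.card (H ⊓ f.range) = 2 is a positive multiple of p: there exists k ≥ 1 with Nat.card {H ∈ K | Nat.card (H ⊓ f.range) = 2} = k * p. -/

import Mathlib

open Subgroup DihedralGroup

/-- In a subgroup of cardinality two, all nontrivial elements coincide. -/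
theorem aux_card_two {G : Type} [Group G] (K : Subgroup G) (h : Nat.card K = 2) (u v : G)
    (hu : u ∈ K) (hv : v ∈ K) (hu1 : u ≠ 1) (hv1 : v ≠ 1) : u = v := by
  obtain ⟨x, y, hxy, hU⟩ := Nat.card_eq_two_iff.mp h
  have mem : ∀ z : K, z = x ∨ z = y := by
    intro z
    have : z ∈ ({x, y} : Set K) := hU ▸ Set.mem_univ z
    simpa using this
  have key : ∀ w : G, ∀ hw : w ∈ K, w ≠ 1 → (⟨w, hw⟩ : K) = (⟨u, hu⟩ : K) := by
    intro w hw hw1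
    rcases mem ⟨1, K.one_mem⟩ with h1 | h1 <;> rcases mem ⟨w, hw⟩ with h2 | h2 <;>
      rcases mem ⟨u, hu⟩ with h3 | h3 <;>
      first
      | (exact h2.trans h3.symm)
      | (exact absurd (congrArg Subtype.val (h2.trans h1.symm)) hw1)
      | (exact absurd (congrArg Subtype.val (h3.trans h1.symm)) hu1)
  exact (congrArg Subtype.val (key v hv hv1)).symm

/-- Conjugation by an element of a subgroup preserves that subgroup. -/
theorem aux_map_conj_self {G : Type} [Group G] (N : Subgroup G) {g : G} (hg : g ∈ N) :
    Subgroup.map (MulAut.conj g).toMonoidHom N = N := by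
  apply le_antisymm
  · rintro _ ⟨m, hm, rfl⟩
    simpa [MulAut.conj_apply] using mul_mem (mul_mem hg hm) (inv_mem hg)
  · intro n hn
    refine ⟨g⁻¹ * n * g, mul_mem (mul_mem (inv_mem hg) hn) hg, ?_⟩
    simp [MulAut.conj_apply]
    group

theorem aux_card_map_conj {G : Type} [Group G] (H : Subgroup G) (g : G) :
    Nat.card (Subgroup.map (MulAut.conj g).toMonoidHom H) = Nat.card H :=
  (Nat.card_congr (H.equivMapOfInjective _ (MulAut.conj g).injective).toEquiv).symm

/-- Pulling back a subgroup contained in the range of an injective hom preserves card. -/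
theorem aux_card_comap {G H : Type} [Group G] [Group H] (f : G →* H)
    (hf : Function.Injective f) (M : Subgroup H) (hM : M ≤ f.range) :
    Nat.card (Subgroup.comap f M) = Nat.card M := by
  have h1 : Subgroup.map f (Subgroup.comap f M) = M := by
    rw [Subgroup.map_comap_eq, inf_eq_right.mpr hM]
  have := Nat.card_congr ((Subgroup.comap f M).equivMapOfInjective f hf).toEquiv
  rw [h1] at this
  exact this

/-- `(MulAut.conj (g₁ * g₂)).toMonoidHom` is composition. -/
theorem aux_conj_mul {G : Type} [Group G] (g₁ g₂ : G) :
    (MulAut.conj (g₁ * g₂)).toMonoidHom =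
      ((MulAut.conj g₁).toMonoidHom).comp (MulAut.conj g₂).toMonoidHom := by
  ext z
  simp [MulAut.conj_apply, mul_assoc]

/-- `x` cannot normalize `f.range` (p ≡ 3 mod 4, so -1 is a nonresidue). -/
theorem aux_not_normalize (p : ℕ) (hp : p.Prime) (hp4 : p % 4 = 3)
    (G' : Type) [Group G'] (f : DihedralGroup p →* G')
    (hf : Function.Injective f) (a : ZMod p) (x : G')
    (hx : x ^ 2 = f (DihedralGroup.sr a)) :
    Subgroup.map (MulAut.conj x).toMonoidHom f.range ≠ f.range := by
  haveI : Fact p.Prime := ⟨hp⟩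
  haveI : NeZero p := ⟨hp.ne_zero⟩
  intro heq
  have h1 : x * f (r 1) * x⁻¹ ∈ f.range := by
    rw [← heq]
    exact ⟨f (r 1), ⟨r 1, rfl⟩, by simp [MulAut.conj_apply]⟩
  obtain ⟨w, hw⟩ := h1
  rcases w with k | k
  · -- w = r k : get k² = -1
    have hpow : ∀ m : ℕ, x * (f (r 1)) ^ m * x⁻¹ = (x * f (r 1) * x⁻¹) ^ m := by
      intro m
      rw [← MulAut.conj_apply, ← MulAut.conj_apply, map_pow]
    have hrk : f (r k) = x * f (r 1) * x⁻¹ := hw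
    have hk1 : (r (1 : ZMod p)) ^ k.val = r k := by
      rw [r_one_pow]
      congr 1
      exact (ZMod.natCast_val k).trans (ZMod.cast_id _ _)
    have hre : r k ^ k.val = r (k * k) := by
      rw [← hk1, ← pow_mul, r_one_pow]
      congr 1
      push_cast
      rw [(ZMod.natCast_val k).trans (ZMod.cast_id _ _)]
    have e2 : x * f (r k) * x⁻¹ = f (r (k * k)) := by
      rw [← hk1, map_pow, hpow, ← hrk, ← map_pow, hre]
    have e3 : x ^ 2 * f (r 1) * (x ^ 2)⁻¹ = f (r (k * k)) := by
      rw [pow_two, mul_inv_rev, show x * x * f (r 1) * (x⁻¹ * x⁻¹) =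
        x * (x * f (r 1) * x⁻¹) * x⁻¹ by group, ← hrk, e2]
    have e4 : x ^ 2 * f (r 1) * (x ^ 2)⁻¹ = f (r (-1)) := by
      rw [hx, ← map_inv, ← map_mul, ← map_mul]
      congr 1
      have hinv : (sr a)⁻¹ = sr a := by
        rw [inv_eq_iff_mul_eq_one, sr_mul_sr, sub_self]; rfl
      rw [hinv, sr_mul_r, sr_mul_sr]
      congr 1
      ring
    have hkk : (k * k : ZMod p) = -1 := by
      have := hf (e3.symm.trans e4)
      exact DihedralGroup.r.inj this
    have : IsSquare (-1 : ZMod p) := ⟨k, hkk.symm⟩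
    exact (ZMod.exists_sq_eq_neg_one_iff.mp this) hp4
  · -- w = sr k : order contradiction
    have h2 : orderOf (f (sr k)) = 2 := by
      rw [orderOf_injective f hf, orderOf_sr]
    have h3 : orderOf (x * f (r 1) * x⁻¹) = p := by
      have h4 : orderOf ((MulAut.conj x).toMonoidHom (f (r 1))) = orderOf (f (r 1)) :=
        orderOf_injective _ (MulAut.conj x).injective _
      rw [show ((MulAut.conj x).toMonoidHom (f (r 1))) = x * f (r 1) * x⁻¹ by
        simp [MulAut.conj_apply]] at h4
      rw [h4, orderOf_injective f hf, orderOf_r_one]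
    rw [hw, h3] at h2
    omega

theorem aux_two_ne_zero (p : ℕ) (hp4 : p % 4 = 3) [NeZero p] : (2 : ZMod p) ≠ 0 := by
  have h : ¬ (p ∣ 2) := by
    intro h
    have := Nat.le_of_dvd (by norm_num) h
    omega
  intro h0
  exact h ((ZMod.natCast_eq_zero_iff 2 p).mp (by exact_mod_cast h0))

/-- Dichotomy: a conjugate of `f.range` containing `f (sr a)` and different from
`f.range` meets it in exactly two elements. -/
theorem aux_green (p : ℕ) (hp : p.Prime) (G' : Type) [Group G'] [Finite G']
    (f : DihedralGroup p →* G') (hf : Function.Injective f) (a' : ZMod p)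
    (H : Subgroup G') (y : G')
    (hH : H = Subgroup.map (MulAut.conj y).toMonoidHom f.range)
    (hs : f (DihedralGroup.sr a') ∈ H) (hne : H ≠ f.range) :
    Nat.card ↥(H ⊓ f.range) = 2 := by
  haveI : NeZero p := ⟨hp.ne_zero⟩
  set K := H ⊓ f.range with hK
  have hcc : Nat.card (Subgroup.comap f K) = Nat.card K :=
    aux_card_comap f hf K inf_le_right
  have hmem : DihedralGroup.sr a' ∈ Subgroup.comap f K :=
    Subgroup.mem_comap.mpr ⟨hs, ⟨DihedralGroup.sr a', rfl⟩⟩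
  have hdvd2 : 2 ∣ Nat.card (Subgroup.comap f K) := by
    have := Subgroup.orderOf_dvd_natCard (Subgroup.comap f K) hmem
    rwa [DihedralGroup.orderOf_sr] at this
  have hdvd : Nat.card (Subgroup.comap f K) ∣ 2 * p := by
    have := Subgroup.card_subgroup_dvd_card (Subgroup.comap f K)
    rwa [DihedralGroup.nat_card] at this
  obtain ⟨e, he⟩ := hdvd2
  have hedvd : e ∣ p := by
    have := he ▸ hdvd
    exact (mul_dvd_mul_iff_left (two_ne_zero)).mp this
  rcases hp.eq_one_or_self_of_dvd e hedvd with he1 | hep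
  · rw [← hcc, he, he1, mul_one]
  · exfalso
    have hcard : Nat.card (Subgroup.comap f K) = Nat.card (DihedralGroup p) := by
      rw [DihedralGroup.nat_card, he, hep]
    have htop : Subgroup.comap f K = ⊤ := Subgroup.eq_top_of_card_eq _ hcard
    have hNle : f.range ≤ K := by
      rintro _ ⟨w, rfl⟩
      exact Subgroup.mem_comap.mp (htop.symm ▸ Subgroup.mem_top w)
    have hKH : f.range ≤ H := hNle.trans inf_le_left
    have hcard2 : Nat.card H = Nat.card f.range := by
      rw [hH]; exact aux_card_map_conj _ _
    exact hne (Subgroup.eq_of_le_of_card_ge hKH hcard2.le).symm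

/-- Freeness: conjugating a green vertex by a nontrivial rotation moves it. -/
theorem aux_free (p : ℕ) (hp : p.Prime) (hp4 : p % 4 = 3) (G' : Type) [Group G'] [Finite G']
    (f : DihedralGroup p →* G') (hf : Function.Injective f)
    (H : Subgroup G') (h2 : Nat.card ↥(H ⊓ f.range) = 2) (c : ZMod p) (hc : c ≠ 0)
    (heq : Subgroup.map (MulAut.conj (f (DihedralGroup.r c))).toMonoidHom H = H) : False := by
  haveI : Fact p.Prime := ⟨hp⟩
  haveI : NeZero p := ⟨hp.ne_zero⟩
  set K := H ⊓ f.range with hK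
  have hcc : Nat.card (Subgroup.comap f K) = 2 := by
    rw [aux_card_comap f hf K inf_le_right]; exact h2
  obtain ⟨z1, z2, hz12, _⟩ := Nat.card_eq_two_iff.mp hcc
  have hex : ∃ u : DihedralGroup p, u ∈ Subgroup.comap f K ∧ u ≠ 1 := by
    by_cases h1 : (z1 : DihedralGroup p) = 1
    · refine ⟨z2, z2.2, fun h => hz12 (Subtype.ext (h1.trans h.symm))⟩
    · exact ⟨z1, z1.2, h1⟩
  obtain ⟨u, hu, hu1⟩ := hex
  have hu2 : u ^ 2 = 1 := by
    have := Subgroup.orderOf_dvd_natCard (Subgroup.comap f K) hu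
    rw [hcc] at this
    exact orderOf_dvd_iff_pow_eq_one.mp this
  obtain ⟨b, rfl⟩ : ∃ b, u = DihedralGroup.sr b := by
    rcases u with i | i
    · exfalso
      have hii : i + i = 0 := by
        have h := hu2
        rw [pow_two, DihedralGroup.r_mul_r, DihedralGroup.one_def] at h
        exact DihedralGroup.r.inj h
      have h2i : (2 : ZMod p) * i = 0 := by rw [two_mul]; exact hii
      rcases mul_eq_zero.mp h2i with h | h
      · exact aux_two_ne_zero p hp4 h
      · exact hu1 (by rw [h]; rfl)
    · exact ⟨i, rfl⟩
  have hmem : f (DihedralGroup.sr b) ∈ K := Subgroup.mem_comap.mp hu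
  have hgK : f (DihedralGroup.r c) * f (DihedralGroup.sr b) * (f (DihedralGroup.r c))⁻¹ ∈ K := by
    refine Subgroup.mem_inf.mpr ⟨?_, ?_⟩
    · rw [← heq]
      exact ⟨f (DihedralGroup.sr b), hmem.1, by simp [MulAut.conj_apply]⟩
    · exact mul_mem (mul_mem ⟨DihedralGroup.r c, rfl⟩ hmem.2) (inv_mem ⟨DihedralGroup.r c, rfl⟩)
  have hrw : f (DihedralGroup.r c) * f (DihedralGroup.sr b) * (f (DihedralGroup.r c))⁻¹
      = f (DihedralGroup.sr (b - c + -c)) := by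
    rw [← map_inv, ← map_mul, ← map_mul]
    rfl
  have hmem2 : DihedralGroup.sr (b - c + -c) ∈ Subgroup.comap f K :=
    Subgroup.mem_comap.mpr (hrw ▸ hgK)
  have hbb := aux_card_two (Subgroup.comap f K) hcc (DihedralGroup.sr b)
    (DihedralGroup.sr (b - c + -c)) hu hmem2 (by rw [DihedralGroup.one_def]; exact fun h => by cases h)
    (by rw [DihedralGroup.one_def]; exact fun h => by cases h)
  have hb : b = b - c + -c := DihedralGroup.sr.inj hbb
  have h2c : (2 : ZMod p) * c = 0 := by linear_combination hb
  rcases mul_eq_zero.mp h2c with h | h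
  · exact aux_two_ne_zero p hp4 h
  · exact hc h

theorem aux_map_conj_one {G : Type} [Group G] (H : Subgroup G) :
    Subgroup.map (MulAut.conj (1 : G)).toMonoidHom H = H := by
  ext z
  simp [Subgroup.mem_map, MulAut.conj_apply]

/-- Lemma 6: the number of "green" edges incident to the vertex `f.range` is a
positive multiple of `p`. -/
theorem green_edges_multiple_of_p (p : ℕ) (hp : p.Prime) (hp4 : p % 4 = 3)
    (G' : Type) [Group G'] [Finite G'] (f : DihedralGroup p →* G')
    (hf : Function.Injective f) (a : ZMod p) (x : G')
    (hx : x ^ 2 = f (DihedralGroup.sr a))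
    (hgen : (⊤ : Subgroup G') = f.range ⊔ Subgroup.zpowers x) :
    ∃ k : ℕ, 1 ≤ k ∧
      Nat.card {H : Subgroup G' |
        (∃ y : G', H = Subgroup.map (MulAut.conj y).toMonoidHom f.range) ∧
          Nat.card ↥(H ⊓ f.range) = 2} = k * p := by
  haveI : Fact p.Prime := ⟨hp⟩
  haveI : NeZero p := ⟨hp.ne_zero⟩
  classical
  set S : Set (Subgroup G') := {H : Subgroup G' |
      (∃ y : G', H = Subgroup.map (MulAut.conj y).toMonoidHom f.range) ∧
        Nat.card ↥(H ⊓ f.range) = 2} with hSdef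
  -- the action of rotations preserves `S`
  have hSmem : ∀ (c : ZMod p) (H : Subgroup G'), H ∈ S →
      Subgroup.map (MulAut.conj (f (DihedralGroup.r c))).toMonoidHom H ∈ S := by
    rintro c H ⟨⟨y, rfl⟩, h2⟩
    refine ⟨⟨f (DihedralGroup.r c) * y, by rw [aux_conj_mul, ← Subgroup.map_map]⟩, ?_⟩
    have hgN : f (DihedralGroup.r c) ∈ f.range := ⟨DihedralGroup.r c, rfl⟩
    have hNfix := aux_map_conj_self f.range hgN
    have hswap : Subgroup.map (MulAut.conj (f (DihedralGroup.r c))).toMonoidHom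
          (Subgroup.map (MulAut.conj y).toMonoidHom f.range) ⊓ f.range
        = Subgroup.map (MulAut.conj (f (DihedralGroup.r c))).toMonoidHom
          (Subgroup.map (MulAut.conj y).toMonoidHom f.range ⊓ f.range) := by
      rw [Subgroup.map_inf _ _ _ (MulAut.conj (f (DihedralGroup.r c))).injective, hNfix]
    rw [hswap, aux_card_map_conj]
    exact h2
  -- a multiplicative action of `Multiplicative (ZMod p)` on `S`
  letI sm : SMul (Multiplicative (ZMod p)) ↥S :=
    ⟨fun c H => ⟨Subgroup.map
      (MulAut.conj (f (DihedralGroup.r (Multiplicative.toAdd c)))).toMonoidHom H.1,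
      hSmem _ _ H.2⟩⟩
  letI ma : MulAction (Multiplicative (ZMod p)) ↥S :=
    { sm with
      one_smul := by
        intro H
        apply Subtype.ext
        show Subgroup.map
          (MulAut.conj (f (DihedralGroup.r (Multiplicative.toAdd 1)))).toMonoidHom H.1 = H.1
        have h0 : Multiplicative.toAdd (1 : Multiplicative (ZMod p)) = (0 : ZMod p) := rfl
        rw [h0, ← DihedralGroup.one_def, map_one, aux_map_conj_one]
      mul_smul := by
        intro c d H
        apply Subtype.ext
        show Subgroup.map
            (MulAut.conj (f (DihedralGroup.r (Multiplicative.toAdd (c * d))))).toMonoidHom H.1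
          = Subgroup.map (MulAut.conj (f (DihedralGroup.r (Multiplicative.toAdd c)))).toMonoidHom
            (Subgroup.map (MulAut.conj (f (DihedralGroup.r (Multiplicative.toAdd d)))).toMonoidHom
              H.1)
        have h1 : Multiplicative.toAdd (c * d)
            = Multiplicative.toAdd c + Multiplicative.toAdd d := rfl
        rw [h1, show DihedralGroup.r (Multiplicative.toAdd c + Multiplicative.toAdd d)
            = DihedralGroup.r (Multiplicative.toAdd c) * DihedralGroup.r (Multiplicative.toAdd d)
            from (DihedralGroup.r_mul_r _ _).symm, map_mul, aux_conj_mul, ← Subgroup.map_map] }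
  -- the action has no fixed points
  haveI hempty : IsEmpty (MulAction.fixedPoints (Multiplicative (ZMod p)) ↥S) := by
    constructor
    rintro ⟨⟨H, hHS⟩, hfix⟩
    have hfix1 := hfix (Multiplicative.ofAdd (1 : ZMod p))
    have heq : Subgroup.map (MulAut.conj (f (DihedralGroup.r (1 : ZMod p)))).toMonoidHom H = H :=
      congrArg Subtype.val hfix1
    exact aux_free p hp hp4 G' f hf H hHS.2 1 one_ne_zero heq
  -- mod-p counting
  have hPG : IsPGroup p (Multiplicative (ZMod p)) :=
    IsPGroup.of_card (by
      rw [pow_one]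
      exact (Nat.card_congr Multiplicative.toAdd).trans (Nat.card_zmod p))
  have hmod := hPG.card_modEq_card_fixedPoints (↥S)
  have h0 : Nat.card ↥(MulAction.fixedPoints (Multiplicative (ZMod p)) ↥S) = 0 :=
    Nat.card_of_isEmpty
  rw [h0] at hmod
  have hdvd : p ∣ Nat.card ↥S := (Nat.modEq_zero_iff_dvd).mp hmod
  -- S is nonempty
  have hxS : Subgroup.map (MulAut.conj x).toMonoidHom f.range ∈ S := by
    refine ⟨⟨x, rfl⟩, ?_⟩
    refine aux_green p hp G' f hf a _ x rfl ?_ ?_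
    · refine ⟨f (DihedralGroup.sr a), ⟨DihedralGroup.sr a, rfl⟩, ?_⟩
      rw [← hx]
      simp only [MulEquiv.coe_toMonoidHom, MulAut.conj_apply]
      group
    · exact aux_not_normalize p hp hp4 G' f hf a x hx
  haveI : Nonempty ↥S := ⟨⟨_, hxS⟩⟩
  have hpos : 0 < Nat.card ↥S := Nat.card_pos
  obtain ⟨k, hk⟩ := hdvd
  refine ⟨k, ?_, ?_⟩
  · rcases Nat.eq_zero_or_pos k with h | h
    · rw [h, mul_zero] at hk; omega
    · exact h
  · rw [hk, mul_comm]
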